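/- With the Concentratable Entanglement C defined as in the NTangled paper, for any two n-qubit pure states ψ and φ, |C(|ψ⟩) − C(|φ⟩)| ≤ 4 |ψ − φ|_tr. -/

import Mathlib

open Matrix BigOperators Complex
open scoped ComplexOrder

noncomputable section

/-- Frobenius (Hilbert–Schmidt) norm `‖X‖₂ = √(Tr(XᴴX))`. -/
def frobNorm {m : Type*} [Fintype m] (X : Matrix m m ℂ) : ℝ :=
  Real.sqrt ((Xᴴ * X).trace.re)

/-- Trace norm (Schatten 1-norm) `‖X‖₁ = Tr √(XᴴX)`. -/
def traceNorm {m : Type*} [Fintype m] [DecidableEq m] (X : Matrix m m ℂ) : ℝ :=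
  (((Matrix.posSemidef_conjTranspose_mul_self X).1.eigenvectorUnitary : Matrix m m ℂ) *
      diagonal ((fun r : ℝ => (r : ℂ)) ∘ (Real.sqrt ·) ∘ (Matrix.posSemidef_conjTranspose_mul_self X).1.eigenvalues) *
      (star (Matrix.posSemidef_conjTranspose_mul_self X).1.eigenvectorUnitary : Matrix m m ℂ)).trace.re

/-- Trace distance `|ρ − σ|_tr = ½‖ρ − σ‖₁`. -/
def traceDist {m : Type*} [Fintype m] [DecidableEq m] (ρ σ : Matrix m m ℂ) : ℝ :=
  traceNorm (ρ - σ) / 2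

/-- Purity `Tr(ρ²)` (real part). -/
def purity {m : Type*} [Fintype m] (ρ : Matrix m m ℂ) : ℝ := ((ρ * ρ).trace).re

/-- Outer product `|ψ⟩⟨ψ|`. -/
def outer {m : Type*} (ψ : m → ℂ) : Matrix m m ℂ :=
  Matrix.of fun a b => ψ a * star (ψ b)

/-- Partial trace over the second tensor factor. -/
def ptraceB {A B : Type*} [Fintype B] (M : Matrix (A × B) (A × B) ℂ) : Matrix A A ℂ :=
  Matrix.of fun a a' => ∑ b, M (a, b) (a', b)

/-- Partial trace over the first tensor factor. -/
def ptraceA {A B : Type*} [Fintype A] (M : Matrix (A × B) (A × B) ℂ) : Matrix B B ℂ :=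
  Matrix.of fun b b' => ∑ a, M (a, b) (a, b')

/-- Index type of the `n`-qubit computational basis. -/
abbrev QIdx (n : ℕ) := Fin n → Fin 2

/-- Merge a bit assignment on `s` with one on its complement. -/
def mergeOn {n : ℕ} (s : Finset (Fin n)) (f : {i // i ∈ s} → Fin 2)
    (g : {i // i ∉ s} → Fin 2) : QIdx n :=
  fun i => if h : i ∈ s then f ⟨i, h⟩ else g ⟨i, h⟩

/-- Reduced density matrix on the qubit subset `s` (partial trace over `sᶜ`). -/
def reduce {n : ℕ} (s : Finset (Fin n)) (ρ : Matrix (QIdx n) (QIdx n) ℂ) :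
    Matrix ({i // i ∈ s} → Fin 2) ({i // i ∈ s} → Fin 2) ℂ :=
  Matrix.of fun f f' => ∑ g : {i // i ∉ s} → Fin 2, ρ (mergeOn s f g) (mergeOn s f' g)

/-- Concentratable Entanglement `C(|ψ⟩) = 1 − 2⁻ⁿ Σ_{α⊆[n]} Tr(ρ_α²)`. -/
def CE {n : ℕ} (ψ : QIdx n → ℂ) : ℝ :=
  1 - (1 / 2 ^ n) * ∑ s : Finset (Fin n), purity (reduce s (outer ψ))

end

noncomputable section Aux
namespace Aux

set_option linter.unusedSectionVars false

section vec
variable {I : Type*} [Fintype I]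

/-- squared ℓ² norm -/
def N2 (v : I → ℂ) : ℝ := ∑ x, Complex.normSq (v x)

def ev (v : I → ℂ) : EuclideanSpace ℂ I := WithLp.toLp 2 v

lemma ev_norm_sq (v : I → ℂ) : ‖ev v‖ ^ 2 = N2 v := by
  rw [EuclideanSpace.norm_eq, Real.sq_sqrt]
  · unfold N2; congr 1; ext x
    rw [← Complex.sq_norm]; rfl
  · positivity

lemma ev_norm (v : I → ℂ) : ‖ev v‖ = Real.sqrt (N2 v) := by
  rw [← ev_norm_sq, Real.sqrt_sq (norm_nonneg _)]

lemma ev_inner (v w : I → ℂ) : (inner ℂ (ev v) (ev w) : ℂ) = ∑ x, star (v x) * w x := by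
  rw [PiLp.inner_apply]
  refine Finset.sum_congr rfl fun i _ => ?_
  simp only [ev, WithLp.ofLp_toLp, RCLike.inner_apply, Complex.star_def]
  ring

lemma cs_normSq (v w : I → ℂ) :
    Complex.normSq (∑ x, star (v x) * w x) ≤ N2 v * N2 w := by
  have h := norm_inner_le_norm (𝕜 := ℂ) (ev v) (ev w)
  rw [ev_inner] at h
  have h2 : ‖(∑ x, star (v x) * w x)‖ ^ 2 ≤ (‖ev v‖ * ‖ev w‖) ^ 2 :=
    pow_le_pow_left₀ (norm_nonneg _) h 2
  rw [mul_pow, ev_norm_sq, ev_norm_sq] at h2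
  calc Complex.normSq (∑ x, star (v x) * w x)
      = ‖(∑ x, star (v x) * w x)‖ ^ 2 := by rw [← Complex.sq_norm]
    _ ≤ N2 v * N2 w := h2

lemma cs_abs (v w : I → ℂ) :
    ‖(∑ x, star (v x) * w x)‖ ≤ Real.sqrt (N2 v) * Real.sqrt (N2 w) := by
  have h := norm_inner_le_norm (𝕜 := ℂ) (ev v) (ev w)
  rw [ev_inner, ev_norm, ev_norm] at h; exact h

lemma N2_nonneg (v : I → ℂ) : 0 ≤ N2 v :=
  Finset.sum_nonneg fun x _ => Complex.normSq_nonneg _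

end vec

section mat
variable {I : Type*} [Fintype I]

/-- Hilbert–Schmidt squared norm of a matrix -/
def hs (M : Matrix I I ℂ) : ℝ := ∑ x, ∑ y, Complex.normSq (M x y)

def mv (M : Matrix I I ℂ) : EuclideanSpace ℂ (I × I) := WithLp.toLp 2 (fun p : I × I => M p.1 p.2)

lemma mv_norm (M : Matrix I I ℂ) : ‖mv M‖ = Real.sqrt (hs M) := by
  rw [EuclideanSpace.norm_eq, Fintype.sum_prod_type]
  congr 1
  unfold hs
  congr 1; ext x; congr 1; ext y
  rw [Complex.normSq_eq_norm_sq]; rfl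

lemma hs_nonneg (M : Matrix I I ℂ) : 0 ≤ hs M := by
  apply Finset.sum_nonneg; intro x _
  apply Finset.sum_nonneg; intro y _; exact Complex.normSq_nonneg _

lemma sqrt_hs_add_le (A B : Matrix I I ℂ) :
    Real.sqrt (hs (A + B)) ≤ Real.sqrt (hs A) + Real.sqrt (hs B) := by
  have h : mv (A + B) = mv A + mv B := by unfold mv; rw [← WithLp.toLp_add]; rfl
  rw [← mv_norm, ← mv_norm, ← mv_norm, h]
  exact norm_add_le _ _

lemma hs_smul (r : ℝ) (M : Matrix I I ℂ) : hs ((r : ℂ) • M) = r ^ 2 * hs M := by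
  unfold hs
  rw [Finset.mul_sum]; congr 1; ext x
  rw [Finset.mul_sum]; congr 1; ext y
  rw [Matrix.smul_apply, smul_eq_mul, Complex.normSq_mul, Complex.normSq_ofReal]
  ring

lemma trace_mul_re_abs_le (A B : Matrix I I ℂ) :
    |((A * B).trace).re| ≤ Real.sqrt (hs A) * Real.sqrt (hs B) := by
  have h1 : (A * B).trace = ∑ p : I × I, A p.1 p.2 * B p.2 p.1 := by
    rw [Fintype.sum_prod_type]
    simp only [Matrix.trace, Matrix.diag, Matrix.mul_apply]
  have h2 : |((A * B).trace).re| ≤ ∑ p : I × I, ‖A p.1 p.2‖ * ‖B p.2 p.1‖ := by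
    rw [h1]
    calc |(∑ p : I × I, A p.1 p.2 * B p.2 p.1).re|
        ≤ ‖∑ p : I × I, A p.1 p.2 * B p.2 p.1‖ := Complex.abs_re_le_norm _
      _ ≤ ∑ p : I × I, ‖A p.1 p.2 * B p.2 p.1‖ := norm_sum_le _ _
      _ = ∑ p : I × I, ‖A p.1 p.2‖ * ‖B p.2 p.1‖ := by
          congr 1; ext p; exact norm_mul _ _
  have h3 := Finset.sum_mul_sq_le_sq_mul_sq Finset.univ
      (fun p : I × I => ‖A p.1 p.2‖) (fun p : I × I => ‖B p.2 p.1‖)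
  have e1 : ∑ p : I × I, ‖A p.1 p.2‖ ^ 2 = hs A := by
    rw [Fintype.sum_prod_type]
    unfold hs; congr 1; ext x; congr 1; ext y
    rw [Complex.normSq_eq_norm_sq]
  have e2 : ∑ p : I × I, ‖B p.2 p.1‖ ^ 2 = hs B := by
    rw [Fintype.sum_prod_type, Finset.sum_comm]
    unfold hs; congr 1; ext x; congr 1; ext y
    rw [Complex.normSq_eq_norm_sq]
  have h4 : ∑ p : I × I, ‖A p.1 p.2‖ * ‖B p.2 p.1‖ ≤ Real.sqrt (hs A) * Real.sqrt (hs B) := by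
    have hnn : (0:ℝ) ≤ ∑ p : I × I, ‖A p.1 p.2‖ * ‖B p.2 p.1‖ :=
      Finset.sum_nonneg fun p _ => mul_nonneg (norm_nonneg _) (norm_nonneg _)
    rw [e1, e2] at h3
    have h5 := Real.sqrt_le_sqrt h3
    rwa [Real.sqrt_sq hnn, Real.sqrt_mul (hs_nonneg A)] at h5
  exact le_trans h2 h4

lemma purity_eq_hs {M : Matrix I I ℂ} (hM : ∀ x y, M y x = star (M x y)) :
    purity M = hs M := by
  unfold purity hs
  rw [Matrix.trace, Complex.re_sum]
  congr 1; ext x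
  rw [Matrix.diag_apply, Matrix.mul_apply, Complex.re_sum]
  congr 1; ext y
  rw [hM x y]
  have h : M x y * star (M x y) = (Complex.normSq (M x y) : ℂ) := by
    rw [mul_comm, Complex.normSq_eq_conj_mul_self]; rfl
  rw [h, Complex.ofReal_re]

/-- rank-one "cross" matrix `|a⟩⟨b|` -/
def cross (a b : I → ℂ) : Matrix I I ℂ :=
  Matrix.of fun x y => a x * star (b y)

lemma outer_eq_cross (a : I → ℂ) : outer a = cross a a := rfl

lemma cross_mul_cross (a b c d : I → ℂ) :
    cross a b * cross c d = (∑ z, star (b z) * c z) • cross a d := by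
  ext x y
  rw [Matrix.mul_apply, Matrix.smul_apply, smul_eq_mul, Finset.sum_mul]
  congr 1; ext z
  simp only [cross, Matrix.of_apply]
  ring

lemma trace_cross (a b : I → ℂ) : (cross a b).trace = ∑ x, star (b x) * a x := by
  rw [Matrix.trace]
  congr 1; ext x
  simp only [Matrix.diag_apply, cross, Matrix.of_apply]
  ring

lemma outer_sub_outer (ψ φ : I → ℂ) :
    outer ψ - outer φ =
      (((1:ℝ)/2 : ℝ) : ℂ) • (cross (ψ + φ) (ψ - φ) + cross (ψ - φ) (ψ + φ)) := by
  ext x y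
  simp only [outer, cross, Matrix.sub_apply, Matrix.add_apply, Matrix.smul_apply,
    Matrix.of_apply, Pi.add_apply, Pi.sub_apply, smul_eq_mul, star_sub, star_add]
  push_cast
  ring

lemma posSemidef_outer (v : I → ℂ) : (outer v).PosSemidef := by
  refine Matrix.PosSemidef.of_dotProduct_mulVec_nonneg ?_ ?_
  · ext x y
    simp only [Matrix.conjTranspose_apply, outer, Matrix.of_apply, star_mul', star_star]
    ring
  · intro x
    set z0 : ℂ := ∑ z, star (v z) * x z with hz0
    have hzs : (starRingEnd ℂ) z0 = ∑ i, star (x i) * v i := by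
      rw [hz0, map_sum]
      congr 1; ext i
      simp only [starRingEnd_apply, star_mul', star_star]
      ring
    have h : dotProduct (star x) ((outer v) *ᵥ x) = (∑ i, star (x i) * v i) * z0 := by
      rw [dotProduct, Finset.sum_mul]
      congr 1; ext i
      rw [Matrix.mulVec, dotProduct, Finset.mul_sum, hz0, Finset.mul_sum]
      congr 1; ext z
      simp only [outer, Matrix.of_apply, Pi.star_apply]
      ring
    rw [h, ← hzs, ← Complex.normSq_eq_conj_mul_self]
    exact_mod_cast Complex.zero_le_real.2 (Complex.normSq_nonneg _)

lemma hermitian_outer (v : I → ℂ) : (outer v)ᴴ = outer v := (posSemidef_outer v).1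

end mat

section merge
variable {n : ℕ} (s : Finset (Fin n))

def mergeEquiv : (({i // i ∈ s} → Fin 2) × ({i // i ∉ s} → Fin 2)) ≃ QIdx n where
  toFun p := mergeOn s p.1 p.2
  invFun x := (fun i => x i.1, fun i => x i.1)
  left_inv p := by
    ext i
    · dsimp [mergeOn]; rw [dif_pos i.2]
    · dsimp [mergeOn]; rw [dif_neg i.2]
  right_inv x := by
    funext i
    dsimp [mergeOn]
    split_ifs <;> rfl

lemma sum_merge (h : QIdx n → ℝ) :
    ∑ f, ∑ g, h (mergeOn s f g) = ∑ x, h x := by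
  have h1 : ∑ p : (({i // i ∈ s} → Fin 2) × ({i // i ∉ s} → Fin 2)), h (mergeOn s p.1 p.2)
      = ∑ f, ∑ g, h (mergeOn s f g) := Fintype.sum_prod_type _
  rw [← h1]
  exact Fintype.sum_equiv (mergeEquiv s) _ _ (fun p => rfl)

lemma reduce_sub (A B : Matrix (QIdx n) (QIdx n) ℂ) :
    reduce s (A - B) = reduce s A - reduce s B := by
  ext f f'
  simp [reduce, Finset.sum_sub_distrib]

lemma reduce_add (A B : Matrix (QIdx n) (QIdx n) ℂ) :
    reduce s (A + B) = reduce s A + reduce s B := by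
  ext f f'
  simp [reduce, Finset.sum_add_distrib]

lemma reduce_smul (t : ℂ) (A : Matrix (QIdx n) (QIdx n) ℂ) :
    reduce s (t • A) = t • reduce s A := by
  ext f f'
  simp [reduce, Finset.mul_sum]

/-- slice of a vector -/
def slice (v : QIdx n → ℂ) (f : {i // i ∈ s} → Fin 2) : ({i // i ∉ s} → Fin 2) → ℂ :=
  fun g => v (mergeOn s f g)

lemma N2_slice (v : QIdx n → ℂ) : ∑ f, N2 (slice s v f) = N2 v := by
  unfold N2 slice
  exact sum_merge s (fun x => Complex.normSq (v x))

/-- Gram-type bound: HS norm of a reduced cross matrix. -/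
lemma hs_reduce_cross_le (a b : QIdx n → ℂ) :
    hs (reduce s (cross a b)) ≤ N2 a * N2 b := by
  have hent : ∀ f f', Complex.normSq (reduce s (cross a b) f f')
      ≤ N2 (slice s a f) * N2 (slice s b f') := by
    intro f f'
    have h1 : reduce s (cross a b) f f' = ∑ g, star (star (slice s a f g) * slice s b f' g) := by
      simp only [reduce, cross, Matrix.of_apply, slice, star_mul', star_star]
    rw [h1, ← star_sum]
    rw [show Complex.normSq (star (∑ g, star (slice s a f g) * slice s b f' g))
        = Complex.normSq (∑ g, star (slice s a f g) * slice s b f' g) from by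
      rw [Complex.star_def, Complex.normSq_conj]]
    exact cs_normSq _ _
  calc hs (reduce s (cross a b))
      ≤ ∑ f, ∑ f', N2 (slice s a f) * N2 (slice s b f') := by
        apply Finset.sum_le_sum; intro f _
        apply Finset.sum_le_sum; intro f' _
        exact hent f f'
    _ = (∑ f, N2 (slice s a f)) * (∑ f', N2 (slice s b f')) := by
        rw [Finset.sum_mul]
        congr 1; ext f
        rw [Finset.mul_sum]
    _ = N2 a * N2 b := by rw [N2_slice, N2_slice]

lemma reduce_outer_herm (v : QIdx n → ℂ) (f f' : {i // i ∈ s} → Fin 2) :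
    reduce s (outer v) f' f = star (reduce s (outer v) f f') := by
  simp only [reduce, outer, Matrix.of_apply, star_sum, star_mul', star_star]
  congr 1; ext g
  ring

lemma purity_reduce_eq_hs (v : QIdx n → ℂ) :
    purity (reduce s (outer v)) = hs (reduce s (outer v)) :=
  purity_eq_hs (fun f f' => reduce_outer_herm s v f f')

lemma purity_reduce_le_one (v : QIdx n → ℂ) (hv : N2 v = 1) :
    purity (reduce s (outer v)) ≤ 1 := by
  rw [purity_reduce_eq_hs, outer_eq_cross]
  calc hs (reduce s (cross v v)) ≤ N2 v * N2 v := hs_reduce_cross_le s v v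
    _ = 1 := by rw [hv]; ring

end merge

section algebra
variable {I : Type*} [Fintype I]

lemma posSemidef_ofReal_smul {r : ℝ} (hr : 0 ≤ r) {M : Matrix I I ℂ} (hM : M.PosSemidef) :
    (((r : ℝ) : ℂ) • M).PosSemidef := by
  refine Matrix.PosSemidef.of_dotProduct_mulVec_nonneg ?_ ?_
  · show (((r : ℝ) : ℂ) • M)ᴴ = ((r : ℝ) : ℂ) • M
    rw [Matrix.conjTranspose_smul, hM.1]
    congr 1
    simp [Complex.star_def, Complex.conj_ofReal]
  · intro x
    have h : dotProduct (star x) ((((r : ℝ) : ℂ) • M) *ᵥ x)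
        = ((r : ℝ) : ℂ) * dotProduct (star x) (M *ᵥ x) := by
      rw [Matrix.smul_mulVec, dotProduct_smul, smul_eq_mul]
    rw [h]
    have h2 := hM.dotProduct_mulVec_nonneg x
    rw [Complex.nonneg_iff] at h2 ⊢
    constructor
    · simp only [Complex.mul_re, Complex.ofReal_re, Complex.ofReal_im, zero_mul, sub_zero]
      exact mul_nonneg hr h2.1
    · simp only [Complex.mul_im, Complex.ofReal_re, Complex.ofReal_im, zero_mul, add_zero]
      rw [← h2.2]; ring

variable (ψ φ : I → ℂ) (c : ℝ)
variable (hψ1 : ∑ z, star (ψ z) * ψ z = 1) (hφ1 : ∑ z, star (φ z) * φ z = 1)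
variable (hc : ∑ z, star (ψ z) * φ z = ((c : ℝ) : ℂ))
variable (hc' : ∑ z, star (φ z) * ψ z = ((c : ℝ) : ℂ))

/-- the Gram–Schmidt complement -/
def wvec : I → ℂ := fun z => φ z - ((c : ℝ) : ℂ) * ψ z

include hc hψ1 in
lemma inner_psi_w : ∑ z, star (ψ z) * wvec ψ φ c z = 0 := by
  have h : ∀ z, star (ψ z) * wvec ψ φ c z
      = star (ψ z) * φ z - ((c:ℝ):ℂ) * (star (ψ z) * ψ z) := by
    intro z; unfold wvec; ring
  rw [Finset.sum_congr rfl (fun z _ => h z), Finset.sum_sub_distrib, ← Finset.mul_sum,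
    hc, hψ1]
  ring

include hc' hψ1 in
lemma inner_w_psi : ∑ z, star (wvec ψ φ c z) * ψ z = 0 := by
  have h : ∀ z, star (wvec ψ φ c z) * ψ z
      = star (φ z) * ψ z - ((c:ℝ):ℂ) * (star (ψ z) * ψ z) := by
    intro z; unfold wvec
    simp only [star_sub, star_mul', Complex.star_def, Complex.conj_ofReal]
    ring
  rw [Finset.sum_congr rfl (fun z _ => h z), Finset.sum_sub_distrib, ← Finset.mul_sum,
    hc', hψ1]
  ring

include hψ1 hφ1 hc hc' in
lemma inner_w_w : ∑ z, star (wvec ψ φ c z) * wvec ψ φ c z = (((1 - c^2 : ℝ)) : ℂ) := by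
  have h : ∀ z, star (wvec ψ φ c z) * wvec ψ φ c z
      = star (φ z) * φ z - ((c:ℝ):ℂ) * (star (φ z) * ψ z) - ((c:ℝ):ℂ) * (star (ψ z) * φ z)
        + ((c:ℝ):ℂ)^2 * (star (ψ z) * ψ z) := by
    intro z; unfold wvec
    simp only [star_sub, star_mul', Complex.star_def, Complex.conj_ofReal]
    ring
  rw [Finset.sum_congr rfl (fun z _ => h z), Finset.sum_add_distrib, Finset.sum_sub_distrib,
    Finset.sum_sub_distrib, ← Finset.mul_sum, ← Finset.mul_sum, ← Finset.mul_sum,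
    hψ1, hφ1, hc, hc']
  push_cast
  ring

/-- expansion of `outer w` in terms of cross matrices -/
lemma outer_w_expand : outer (wvec ψ φ c) =
    cross φ φ - ((c:ℝ):ℂ) • cross φ ψ - ((c:ℝ):ℂ) • cross ψ φ
      + (((c^2 : ℝ)):ℂ) • cross ψ ψ := by
  ext x y
  simp only [outer, cross, wvec, Matrix.of_apply, Matrix.add_apply, Matrix.sub_apply,
    Matrix.smul_apply, smul_eq_mul, star_sub, star_mul', Complex.star_def,
    Complex.conj_ofReal]
  push_cast
  ring

include hψ1 hφ1 hc hc' in
lemma Xsq : (outer ψ - outer φ) * (outer ψ - outer φ)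
    = (((1 - c^2 : ℝ)) : ℂ) • outer ψ + outer (wvec ψ φ c) := by
  rw [outer_w_expand, outer_eq_cross, outer_eq_cross, sub_mul, mul_sub, mul_sub,
    cross_mul_cross, cross_mul_cross, cross_mul_cross, cross_mul_cross,
    hψ1, hφ1, hc, hc', one_smul, one_smul]
  push_cast
  module

include hψ1 hφ1 hc hc' in
lemma Bsq {D : ℝ} (hD : D ≠ 0) (hD2 : D ^ 2 = 1 - c ^ 2) :
    (((D:ℝ):ℂ) • outer ψ + ((D⁻¹:ℝ):ℂ) • outer (wvec ψ φ c))
      * (((D:ℝ):ℂ) • outer ψ + ((D⁻¹:ℝ):ℂ) • outer (wvec ψ φ c))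
      = (((1 - c^2 : ℝ)) : ℂ) • outer ψ + outer (wvec ψ φ c) := by
  have hpp : outer ψ * outer ψ = outer ψ := by
    rw [outer_eq_cross, cross_mul_cross, hψ1, one_smul]
  have hpw : outer ψ * outer (wvec ψ φ c) = 0 := by
    rw [outer_eq_cross, outer_eq_cross, cross_mul_cross, inner_psi_w ψ φ c hψ1 hc, zero_smul]
  have hwp : outer (wvec ψ φ c) * outer ψ = 0 := by
    rw [outer_eq_cross, outer_eq_cross, cross_mul_cross, inner_w_psi ψ φ c hψ1 hc', zero_smul]
  have hww : outer (wvec ψ φ c) * outer (wvec ψ φ c)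
      = (((1 - c^2 : ℝ)) : ℂ) • outer (wvec ψ φ c) := by
    rw [outer_eq_cross (wvec ψ φ c), cross_mul_cross, inner_w_w ψ φ c hψ1 hφ1 hc hc']
  have hDc : ((D:ℝ):ℂ) ≠ 0 := Complex.ofReal_ne_zero.mpr hD
  simp only [add_mul, mul_add, Matrix.smul_mul, Matrix.mul_smul, hpp, hpw, hwp, hww,
    smul_zero, add_zero, zero_add, smul_smul]
  have hD2c : ((D:ℝ):ℂ) ^ 2 = 1 - ((c:ℝ):ℂ) ^ 2 := by exact_mod_cast hD2
  match_scalars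
  · rw [← hD2c]; ring
  · rw [← hD2c]
    field_simp

end algebra

section norms
variable {I : Type*} [Fintype I]

lemma re_term (z w : ℂ) : (z * (starRingEnd ℂ) w).re = (star z * w).re := by
  rw [← Complex.conj_re (z * (starRingEnd ℂ) w), _root_.map_mul, Complex.conj_conj]
  rfl

lemma N2_add (v w : I → ℂ) :
    N2 (v + w) = N2 v + N2 w + 2 * (∑ z, star (v z) * w z).re := by
  unfold N2
  rw [Complex.re_sum, Finset.mul_sum, ← Finset.sum_add_distrib, ← Finset.sum_add_distrib]
  congr 1; ext z
  rw [Pi.add_apply, Complex.normSq_add, re_term]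

lemma N2_sub (v w : I → ℂ) :
    N2 (v - w) = N2 v + N2 w - 2 * (∑ z, star (v z) * w z).re := by
  unfold N2
  rw [Complex.re_sum, Finset.mul_sum]
  rw [show (∑ x, Complex.normSq (v x)) + ∑ x, Complex.normSq (w x)
        - ∑ i, 2 * ((star (v i) * w i).re)
      = ∑ x, (Complex.normSq (v x) + Complex.normSq (w x) - 2 * ((star (v x) * w x).re)) from by
    rw [Finset.sum_sub_distrib, Finset.sum_add_distrib]]
  congr 1; ext z
  rw [Pi.sub_apply, Complex.normSq_sub, re_term]

variable [DecidableEq I]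

open scoped MatrixOrder in
lemma traceNorm_eq_of (X B : Matrix I I ℂ) (hB : B.PosSemidef) (hsq : B * B = Xᴴ * X) :
    traceNorm X = B.trace.re := by
  have hA := Matrix.posSemidef_conjTranspose_mul_self X
  have h1 : cfc Real.sqrt (Xᴴ * X) = B := by
    rw [← cfcₙ_eq_cfc (hf0 := by simp), ← CFC.sqrt_eq_real_sqrt _ hA.nonneg]
    exact CFC.sqrt_unique hsq hB.nonneg
  unfold traceNorm
  rw [← h1, hA.1.cfc_eq, Matrix.IsHermitian.cfc, Unitary.conjStarAlgAut_apply]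
  rfl

lemma traceNorm_zero' : traceNorm (0 : Matrix I I ℂ) = 0 := by
  rw [traceNorm_eq_of 0 0 Matrix.PosSemidef.zero (by simp)]
  simp

lemma traceNorm_outer_sub (ψ φ : I → ℂ) (c : ℝ)
    (hψ1 : ∑ z, star (ψ z) * ψ z = 1) (hφ1 : ∑ z, star (φ z) * φ z = 1)
    (hc : ∑ z, star (ψ z) * φ z = ((c : ℝ) : ℂ))
    (hc' : ∑ z, star (φ z) * ψ z = ((c : ℝ) : ℂ))
    {D : ℝ} (hD : 0 < D) (hD2 : D ^ 2 = 1 - c ^ 2) :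
    traceNorm (outer ψ - outer φ) = 2 * D := by
  set X := outer ψ - outer φ with hX
  set B := ((D:ℝ):ℂ) • outer ψ + ((D⁻¹:ℝ):ℂ) • outer (wvec ψ φ c) with hBdef
  have hXH : Xᴴ = X := by
    rw [hX, Matrix.conjTranspose_sub, hermitian_outer, hermitian_outer]
  have hB : B.PosSemidef :=
    Matrix.PosSemidef.add (posSemidef_ofReal_smul hD.le (posSemidef_outer ψ))
      (posSemidef_ofReal_smul (inv_nonneg.mpr hD.le) (posSemidef_outer _))
  have hsq : B ^ 2 = Xᴴ * X := by
    rw [pow_two, hXH, hBdef, hX]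
    rw [Bsq ψ φ c hψ1 hφ1 hc hc' hD.ne' hD2, Xsq ψ φ c hψ1 hφ1 hc hc']
  have hkey : traceNorm X = B.trace.re :=
    traceNorm_eq_of X B hB (by rw [← pow_two]; exact hsq)
  have htr : B.trace = ((D + D⁻¹ * (1 - c^2) : ℝ) : ℂ) := by
    rw [hBdef, Matrix.trace_add, Matrix.trace_smul, Matrix.trace_smul,
      outer_eq_cross, outer_eq_cross, trace_cross, trace_cross, hψ1,
      inner_w_w ψ φ c hψ1 hφ1 hc hc']
    push_cast [smul_eq_mul]
    ring
  rw [hkey, htr, Complex.ofReal_re, ← hD2]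
  field_simp
  ring

end norms

section persubset
variable {n : ℕ}

lemma purity_diff_le (s : Finset (Fin n)) (ψ φ : QIdx n → ℂ)
    (hψ : N2 ψ = 1) (hφ : N2 φ = 1) :
    |purity (reduce s (outer ψ)) - purity (reduce s (outer φ))|
      ≤ 2 * (Real.sqrt (N2 (ψ + φ)) * Real.sqrt (N2 (ψ - φ))) := by
  set R := reduce s (outer ψ) with hR
  set S := reduce s (outer φ) with hS
  have htr : purity R - purity S = (((R - S) * (R + S)).trace).re := by
    have hm : (R - S) * (R + S) = R * R + (R * S - S * R) - S * S := by noncomm_ring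
    rw [hm, Matrix.trace_sub, Matrix.trace_add, Matrix.trace_sub,
      Matrix.trace_mul_comm R S, sub_self, add_zero]
    unfold purity
    rw [Complex.sub_re]
  have h2 : |purity R - purity S| ≤ Real.sqrt (hs (R - S)) * Real.sqrt (hs (R + S)) := by
    rw [htr]; exact trace_mul_re_abs_le _ _
  have hRle : Real.sqrt (hs R) ≤ 1 := by
    rw [hR, ← purity_reduce_eq_hs]
    calc Real.sqrt (purity (reduce s (outer ψ))) ≤ Real.sqrt 1 :=
          Real.sqrt_le_sqrt (purity_reduce_le_one s ψ hψ)
      _ = 1 := Real.sqrt_one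
  have hSle : Real.sqrt (hs S) ≤ 1 := by
    rw [hS, ← purity_reduce_eq_hs]
    calc Real.sqrt (purity (reduce s (outer φ))) ≤ Real.sqrt 1 :=
          Real.sqrt_le_sqrt (purity_reduce_le_one s φ hφ)
      _ = 1 := Real.sqrt_one
  have h3 : Real.sqrt (hs (R + S)) ≤ 2 := by
    calc Real.sqrt (hs (R + S)) ≤ Real.sqrt (hs R) + Real.sqrt (hs S) := sqrt_hs_add_le _ _
      _ ≤ 2 := by linarith
  have h4 : Real.sqrt (hs (R - S)) ≤ Real.sqrt (N2 (ψ + φ)) * Real.sqrt (N2 (ψ - φ)) := by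
    have hRS : R - S = (((1:ℝ)/2 : ℝ) : ℂ) •
        (reduce s (cross (ψ + φ) (ψ - φ)) + reduce s (cross (ψ - φ) (ψ + φ))) := by
      rw [hR, hS, ← reduce_sub, outer_sub_outer, reduce_smul, reduce_add]
    rw [hRS, hs_smul]
    rw [Real.sqrt_mul (by positivity)]
    have hsq : Real.sqrt (((1:ℝ)/2) ^ 2) = 1/2 := by
      rw [Real.sqrt_sq]; norm_num
    rw [hsq]
    have h5 : Real.sqrt (hs (reduce s (cross (ψ + φ) (ψ - φ)) + reduce s (cross (ψ - φ) (ψ + φ))))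
        ≤ Real.sqrt (hs (reduce s (cross (ψ + φ) (ψ - φ))))
          + Real.sqrt (hs (reduce s (cross (ψ - φ) (ψ + φ)))) := sqrt_hs_add_le _ _
    have h6 : Real.sqrt (hs (reduce s (cross (ψ + φ) (ψ - φ))))
        ≤ Real.sqrt (N2 (ψ + φ)) * Real.sqrt (N2 (ψ - φ)) := by
      calc Real.sqrt (hs (reduce s (cross (ψ + φ) (ψ - φ))))
          ≤ Real.sqrt (N2 (ψ + φ) * N2 (ψ - φ)) :=
            Real.sqrt_le_sqrt (hs_reduce_cross_le s _ _)
        _ = Real.sqrt (N2 (ψ + φ)) * Real.sqrt (N2 (ψ - φ)) :=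
            Real.sqrt_mul (N2_nonneg _) _
    have h7 : Real.sqrt (hs (reduce s (cross (ψ - φ) (ψ + φ))))
        ≤ Real.sqrt (N2 (ψ + φ)) * Real.sqrt (N2 (ψ - φ)) := by
      calc Real.sqrt (hs (reduce s (cross (ψ - φ) (ψ + φ))))
          ≤ Real.sqrt (N2 (ψ - φ) * N2 (ψ + φ)) :=
            Real.sqrt_le_sqrt (hs_reduce_cross_le s _ _)
        _ = Real.sqrt (N2 (ψ + φ)) * Real.sqrt (N2 (ψ - φ)) := by
            rw [Real.sqrt_mul (N2_nonneg _), mul_comm]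
    calc (1/2 : ℝ) * Real.sqrt (hs (reduce s (cross (ψ + φ) (ψ - φ)) + reduce s (cross (ψ - φ) (ψ + φ))))
        ≤ (1/2 : ℝ) * (Real.sqrt (N2 (ψ + φ)) * Real.sqrt (N2 (ψ - φ))
            + Real.sqrt (N2 (ψ + φ)) * Real.sqrt (N2 (ψ - φ))) := by
          apply mul_le_mul_of_nonneg_left _ (by norm_num)
          exact le_trans h5 (add_le_add h6 h7)
      _ = Real.sqrt (N2 (ψ + φ)) * Real.sqrt (N2 (ψ - φ)) := by ring
  calc |purity R - purity S| ≤ Real.sqrt (hs (R - S)) * Real.sqrt (hs (R + S)) := h2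
    _ ≤ (Real.sqrt (N2 (ψ + φ)) * Real.sqrt (N2 (ψ - φ))) * 2 := by
        apply mul_le_mul h4 h3 (Real.sqrt_nonneg _)
        positivity
    _ = 2 * (Real.sqrt (N2 (ψ + φ)) * Real.sqrt (N2 (ψ - φ))) := by ring

lemma CE_diff_le (ψ φ : QIdx n → ℂ) (hψ : N2 ψ = 1) (hφ : N2 φ = 1) :
    |CE ψ - CE φ| ≤ 2 * (Real.sqrt (N2 (ψ + φ)) * Real.sqrt (N2 (ψ - φ))) := by
  have hCE : CE ψ - CE φ = (1 / 2 ^ n : ℝ) *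
      ∑ s : Finset (Fin n), (purity (reduce s (outer φ)) - purity (reduce s (outer ψ))) := by
    unfold CE
    rw [Finset.sum_sub_distrib]
    ring
  rw [hCE, abs_mul]
  have hpos : |(1 / 2 ^ n : ℝ)| = 1 / 2 ^ n := abs_of_pos (by positivity)
  rw [hpos]
  have hb : |∑ s : Finset (Fin n), (purity (reduce s (outer φ)) - purity (reduce s (outer ψ)))|
      ≤ (2 ^ n : ℝ) * (2 * (Real.sqrt (N2 (ψ + φ)) * Real.sqrt (N2 (ψ - φ)))) := by
    calc |∑ s : Finset (Fin n), (purity (reduce s (outer φ)) - purity (reduce s (outer ψ)))|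
        ≤ ∑ s : Finset (Fin n), |purity (reduce s (outer φ)) - purity (reduce s (outer ψ))| :=
          Finset.abs_sum_le_sum_abs _ _
      _ ≤ ∑ _s : Finset (Fin n), 2 * (Real.sqrt (N2 (ψ + φ)) * Real.sqrt (N2 (ψ - φ))) := by
          apply Finset.sum_le_sum
          intro s _
          rw [show N2 (ψ + φ) = N2 (φ + ψ) from by rw [add_comm],
            show N2 (ψ - φ) = N2 (φ - ψ) from by
              unfold N2; congr 1; ext x
              rw [Pi.sub_apply, Pi.sub_apply, ← Complex.normSq_neg, neg_sub]]
          exact purity_diff_le s φ ψ hφ hψ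
      _ = (2 ^ n : ℝ) * (2 * (Real.sqrt (N2 (ψ + φ)) * Real.sqrt (N2 (ψ - φ)))) := by
          rw [Finset.sum_const, Finset.card_univ]
          have : Fintype.card (Finset (Fin n)) = 2 ^ n := by
            rw [Fintype.card_finset, Fintype.card_fin]
          rw [this]
          simp [nsmul_eq_mul]
  calc (1 / 2 ^ n : ℝ) * |∑ s : Finset (Fin n), (purity (reduce s (outer φ)) - purity (reduce s (outer ψ)))|
      ≤ (1 / 2 ^ n : ℝ) * ((2 ^ n : ℝ) * (2 * (Real.sqrt (N2 (ψ + φ)) * Real.sqrt (N2 (ψ - φ))))) := by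
        apply mul_le_mul_of_nonneg_left hb (by positivity)
    _ = 2 * (Real.sqrt (N2 (ψ + φ)) * Real.sqrt (N2 (ψ - φ))) := by
        field_simp

end persubset
end Aux
end Aux

open Aux in
/-- Continuity of Concentratable Entanglement: `|C(ψ) − C(φ)| ≤ 4 |ψ − φ|_tr`. -/
theorem stmt_7 {n : ℕ} (ψ φ : QIdx n → ℂ)
    (hψ : ∑ f, Complex.normSq (ψ f) = 1) (hφ : ∑ f, Complex.normSq (φ f) = 1) :
    |CE ψ - CE φ| ≤ 4 * traceDist (outer ψ) (outer φ) := by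
  classical
  set c0 : ℂ := ∑ f, star (ψ f) * φ f with hc0def
  set u : ℂ := if c0 = 0 then 1 else ((‖c0‖ : ℝ) : ℂ) / c0 with hudef
  set φ' : QIdx n → ℂ := fun x => u * φ x with hφ'def
  set c : ℝ := ‖c0‖ with hcdef
  have hc0 : 0 ≤ c := norm_nonneg _
  have hnu : Complex.normSq u = 1 := by
    by_cases h : c0 = 0
    · rw [hudef, if_pos h]; simp
    · rw [hudef, if_neg h, map_div₀, Complex.normSq_ofReal, ← sq, ← Complex.normSq_eq_norm_sq]
      field_simp [Complex.normSq_eq_zero, h]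
  have huu : u * star u = 1 := by
    rw [Complex.star_def, Complex.mul_conj, hnu]; simp
  have houter : outer φ' = outer φ := by
    ext x y
    simp only [outer, Matrix.of_apply, hφ'def, star_mul']
    linear_combination (φ x * star (φ y)) * huu
  have hN2ψ : N2 ψ = 1 := hψ
  have hN2φ' : N2 φ' = 1 := by
    unfold N2
    rw [show ∑ x, Complex.normSq (φ' x) = ∑ x, Complex.normSq u * Complex.normSq (φ x) from by
      congr 1; ext x; rw [hφ'def]; exact Complex.normSq_mul _ _]
    rw [show ∑ x, Complex.normSq u * Complex.normSq (φ x)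
        = Complex.normSq u * ∑ x, Complex.normSq (φ x) from (Finset.mul_sum _ _ _).symm]
    rw [hnu, hφ]; ring
  have hψ1 : ∑ z, star (ψ z) * ψ z = 1 := by
    rw [show ∑ z, star (ψ z) * ψ z = ∑ z, ((Complex.normSq (ψ z) : ℝ) : ℂ) from by
      congr 1; ext z; rw [Complex.star_def, ← Complex.normSq_eq_conj_mul_self]]
    rw [show ∑ z, ((Complex.normSq (ψ z) : ℝ) : ℂ) = ((∑ z, Complex.normSq (ψ z) : ℝ) : ℂ) from by
      push_cast; rfl]
    rw [hψ]; norm_num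
  have hφ'1 : ∑ z, star (φ' z) * φ' z = 1 := by
    rw [show ∑ z, star (φ' z) * φ' z = ∑ z, ((Complex.normSq (φ' z) : ℝ) : ℂ) from by
      congr 1; ext z; rw [Complex.star_def, ← Complex.normSq_eq_conj_mul_self]]
    rw [show ∑ z, ((Complex.normSq (φ' z) : ℝ) : ℂ) = ((∑ z, Complex.normSq (φ' z) : ℝ) : ℂ) from by
      push_cast; rfl]
    rw [show (∑ z, Complex.normSq (φ' z) : ℝ) = N2 φ' from rfl, hN2φ']
    norm_num
  have hcc : ∑ z, star (ψ z) * φ' z = ((c : ℝ) : ℂ) := by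
    have hsum : ∑ z, star (ψ z) * φ' z = u * c0 := by
      rw [hc0def, Finset.mul_sum]
      congr 1; ext z
      rw [hφ'def]; ring
    rw [hsum]
    by_cases h : c0 = 0
    · rw [h, hudef, hcdef, h]; simp
    · rw [hudef, if_neg h, hcdef]
      field_simp
  have hcc' : ∑ z, star (φ' z) * ψ z = ((c : ℝ) : ℂ) := by
    have hst : ∑ z, star (φ' z) * ψ z = star (∑ z, star (ψ z) * φ' z) := by
      rw [star_sum]
      congr 1; ext z
      simp only [star_mul', star_star]
      ring
    rw [hst, hcc, Complex.star_def, Complex.conj_ofReal]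
  have hc1 : c ≤ 1 := by
    have h := cs_abs ψ φ'
    rw [hcc, hN2ψ, hN2φ', Real.sqrt_one, one_mul] at h
    rwa [Complex.norm_real, Real.norm_eq_abs, _root_.abs_of_nonneg hc0] at h
  have hNa : N2 (ψ + φ') = 2 + 2 * c := by
    rw [N2_add, hN2ψ, hN2φ', hcc, Complex.ofReal_re]; ring
  have hNb : N2 (ψ - φ') = 2 - 2 * c := by
    rw [N2_sub, hN2ψ, hN2φ', hcc, Complex.ofReal_re]; ring
  have hCEφ : CE φ' = CE φ := by
    unfold CE; rw [houter]
  have hLHS : |CE ψ - CE φ| ≤ 2 * (Real.sqrt (2 + 2*c) * Real.sqrt (2 - 2*c)) := by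
    rw [← hCEφ, ← hNa, ← hNb]
    exact CE_diff_le ψ φ' hN2ψ hN2φ'
  by_cases hlt : c < 1
  · set D := Real.sqrt (1 - c^2) with hDdef
    have h1c : 0 < 1 - c^2 := by nlinarith
    have hDpos : 0 < D := Real.sqrt_pos.mpr h1c
    have hD2 : D^2 = 1 - c^2 := Real.sq_sqrt h1c.le
    have hTN : traceNorm (outer ψ - outer φ) = 2 * D := by
      rw [← houter]
      exact traceNorm_outer_sub ψ φ' c hψ1 hφ'1 hcc hcc' hDpos hD2
    have hprod : Real.sqrt (2 + 2*c) * Real.sqrt (2 - 2*c) = 2 * D := by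
      rw [← Real.sqrt_mul (by linarith), show (2 + 2*c) * (2 - 2*c) = 4 * (1 - c^2) from by ring,
        Real.sqrt_mul (by norm_num), show Real.sqrt 4 = 2 from by
          rw [show (4:ℝ) = 2^2 from by norm_num, Real.sqrt_sq (by norm_num)]]
    rw [traceDist, hTN]
    calc |CE ψ - CE φ| ≤ 2 * (Real.sqrt (2 + 2*c) * Real.sqrt (2 - 2*c)) := hLHS
      _ = 4 * (2 * D / 2) := by rw [hprod]; ring
  · have hceq : c = 1 := le_antisymm hc1 (not_lt.mp hlt)
    have hNb0 : N2 (ψ - φ') = 0 := by rw [hNb, hceq]; ring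
    have hψφ : ψ = φ' := by
      funext x
      have h := (Finset.sum_eq_zero_iff_of_nonneg
        (fun i _ => Complex.normSq_nonneg ((ψ - φ') i))).mp hNb0 x (Finset.mem_univ x)
      have h2 := Complex.normSq_eq_zero.mp h
      rw [Pi.sub_apply] at h2
      exact sub_eq_zero.mp h2
    have hX0 : outer ψ - outer φ = 0 := by
      rw [hψφ, houter, sub_self]
    have hCE0 : CE ψ = CE φ := by rw [hψφ, hCEφ]
    rw [hCE0, sub_self, abs_zero, traceDist, hX0, traceNorm_zero']
    norm_num
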